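/- arXiv:1903.08153 — 3 statements merged into one kernel-verified Lean document; each statement's English description precedes it below -/
import Mathlib

section
/- The map sending (a, b, c, h) ∈ F_q × F_q × F_q × F_2 to the function F_q → F_2, x ↦ Tr(a·x^5 + b·x^3 + c·x) + h, is injective; consequently the code C has exactly 2^(3m+1) codewords, i.e., C has dimension 3m+1 as an F_2-linear code of length 2^m. -/
section
variable (F : Type) [Field F] [Fintype F] [Algebra (ZMod 2) F]

lemma aux_trace_sq [CharP F 2] (z : F) :
    Algebra.trace (ZMod 2) F (z ^ 2) = Algebra.trace (ZMod 2) F z := by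
  have hcomm : ∀ c : ZMod 2, frobeniusEquiv F 2 (algebraMap (ZMod 2) F c)
      = algebraMap (ZMod 2) F c := by
    intro c
    rw [frobeniusEquiv_def, ← map_pow]
    congr 1
    exact ZMod.pow_card c
  let σ : F ≃ₐ[ZMod 2] F := AlgEquiv.ofRingEquiv (f := frobeniusEquiv F 2) hcomm
  have := Algebra.trace_eq_of_algEquiv σ z
  simpa [σ, AlgEquiv.ofRingEquiv, frobeniusEquiv_def, frobenius_def] using this

lemma aux_key (s : ℕ) (hs : 3 ≤ s) (hcard : Fintype.card F = 2 ^ (2 * s))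
    (a b c : F) (h : ZMod 2)
    (H : ∀ x : F, Algebra.trace (ZMod 2) F (a * x ^ 5 + b * x ^ 3 + c * x) + h = 0) :
    a = 0 ∧ b = 0 ∧ c = 0 ∧ h = 0 := by
  haveI : CharP F 2 := charP_of_injective_algebraMap (algebraMap (ZMod 2) F).injective 2
  haveI : FiniteDimensional (ZMod 2) F := Module.Finite.of_finite
  have h2 : (2 : F) = 0 := by
    have := CharP.cast_eq_zero F 2; exact_mod_cast this
  -- h = 0
  have hh : h = 0 := by
    have := H 0
    simpa using this
  have H0 : ∀ x : F, Algebra.trace (ZMod 2) F (a * x ^ 5 + b * x ^ 3 + c * x) = 0 := by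
    intro x; have := H x; rwa [hh, add_zero] at this
  -- nondegeneracy
  have ndg : ∀ u : F, (∀ y : F, Algebra.trace (ZMod 2) F (u * y) = 0) → u = 0 := by
    intro u hu
    have := traceForm_nondegenerate (ZMod 2) F
    exact this.1 u (fun y => by simpa [Algebra.traceForm_apply] using hu y)
  -- polarization
  have cross : ∀ x y : F,
      Algebra.trace (ZMod 2) F (a * (x ^ 4 * y + x * y ^ 4) + b * (x ^ 2 * y + x * y ^ 2)) = 0 := by
    intro x y
    have e : a * (x + y) ^ 5 + b * (x + y) ^ 3 + c * (x + y)
        = (a * x ^ 5 + b * x ^ 3 + c * x) + (a * y ^ 5 + b * y ^ 3 + c * y)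
          + (a * (x ^ 4 * y + x * y ^ 4) + b * (x ^ 2 * y + x * y ^ 2)) := by
      linear_combination (a * (2 * x ^ 4 * y + 5 * x ^ 3 * y ^ 2 + 5 * x ^ 2 * y ^ 3
        + 2 * x * y ^ 4) + b * (x ^ 2 * y + x * y ^ 2)) * h2
    have := H0 (x + y)
    rw [e, map_add, map_add, H0 x, H0 y, zero_add, zero_add] at this
    exact this
  -- 4th roots
  obtain ⟨A, hA⟩ : ∃ A : F, A ^ 4 = a := ⟨(frobeniusEquiv F 2).symm ((frobeniusEquiv F 2).symm a),
    by rw [show (4:ℕ) = 2*2 by norm_num, pow_mul, ← frobeniusEquiv_def F 2,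
        ← frobeniusEquiv_def F 2, RingEquiv.apply_symm_apply, RingEquiv.apply_symm_apply]⟩
  obtain ⟨B, hB⟩ : ∃ B : F, B ^ 4 = b := ⟨(frobeniusEquiv F 2).symm ((frobeniusEquiv F 2).symm b),
    by rw [show (4:ℕ) = 2*2 by norm_num, pow_mul, ← frobeniusEquiv_def F 2,
        ← frobeniusEquiv_def F 2, RingEquiv.apply_symm_apply, RingEquiv.apply_symm_apply]⟩
  -- linearized identity
  have lin : ∀ u : F, A ^ 4 * u ^ 16 + B ^ 4 * u ^ 8 + B ^ 2 * u ^ 2 + A * u = 0 := by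
    intro u
    apply ndg
    intro y
    have hc := cross (u ^ 4) y
    have e1 : a * ((u^4) ^ 4 * y + (u^4) * y ^ 4) + b * ((u^4) ^ 2 * y + (u^4) * y ^ 2)
        = a * u ^ 16 * y + ((A * u * y)^2)^2 + (b * u ^ 8 * y + (B ^ 2 * u ^ 2 * y)^2) := by
      rw [← hA, ← hB]; ring
    rw [e1, map_add, map_add, map_add] at hc
    simp only [aux_trace_sq] at hc
    have e2 : (A ^ 4 * u ^ 16 + B ^ 4 * u ^ 8 + B ^ 2 * u ^ 2 + A * u) * y
        = a * u ^ 16 * y + A * u * y + (b * u ^ 8 * y + B ^ 2 * u ^ 2 * y) := by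
      rw [← hA, ← hB]; ring
    rw [e2, map_add, map_add, map_add]
    linear_combination hc
  -- polynomial argument
  have hcard16 : (16 : ℕ) < Fintype.card F := by
    rw [hcard]
    calc (16:ℕ) < 2 ^ 6 := by norm_num
      _ ≤ 2 ^ (2 * s) := Nat.pow_le_pow_right (by norm_num) (by omega)
  set P : Polynomial F := Polynomial.C (A ^ 4) * Polynomial.X ^ 16
      + Polynomial.C (B ^ 4) * Polynomial.X ^ 8
      + Polynomial.C (B ^ 2) * Polynomial.X ^ 2 + Polynomial.C A * Polynomial.X with hP
  have hPdeg : P.natDegree ≤ 16 := by rw [hP]; compute_degree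
  have hPeval : ∀ x : F, P.eval x = 0 := by
    intro x
    have e : P.eval x = A ^ 4 * x ^ 16 + B ^ 4 * x ^ 8 + B ^ 2 * x ^ 2 + A * x := by
      simp [hP]
    rw [e]; exact lin x
  have hP0 : P = 0 := Polynomial.eq_zero_of_natDegree_lt_card_of_eval_eq_zero P
    Function.injective_id (fun x => hPeval x) (lt_of_le_of_lt hPdeg hcard16)
  have hA0 : A = 0 := by
    have := congrArg (fun Q : Polynomial F => Q.coeff 1) hP0
    simp only [hP, Polynomial.coeff_add, Polynomial.coeff_C_mul, Polynomial.coeff_X_pow,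
      Polynomial.coeff_X_one, Polynomial.coeff_zero] at this
    simpa using this
  have hB0 : B = 0 := by
    have := congrArg (fun Q : Polynomial F => Q.coeff 2) hP0
    simp only [hP, Polynomial.coeff_add, Polynomial.coeff_C_mul, Polynomial.coeff_X_pow,
      Polynomial.coeff_X, Polynomial.coeff_zero] at this
    norm_num at this
    exact this
  have ha0 : a = 0 := by rw [← hA, hA0]; simp
  have hb0 : b = 0 := by rw [← hB, hB0]; simp
  have hc0 : c = 0 := by
    apply ndg
    intro y
    have := H0 y
    rw [ha0, hb0] at this
    simpa using this
  exact ⟨ha0, hb0, hc0, hh⟩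
end

theorem stmt_0 (s : ℕ) (hs : 3 ≤ s)
    (F : Type) [Field F] [Fintype F] [Algebra (ZMod 2) F]
    (hcard : Fintype.card F = 2 ^ (2 * s))
    (C : Set (F → ZMod 2))
    (hC : C = {f | ∃ (a b c : F) (h : ZMod 2),
        f = fun x => Algebra.trace (ZMod 2) F (a * x ^ 5 + b * x ^ 3 + c * x) + h}) :
    Function.Injective (fun p : F × F × F × ZMod 2 =>
      fun x : F =>
        Algebra.trace (ZMod 2) F (p.1 * x ^ 5 + p.2.1 * x ^ 3 + p.2.2.1 * x) + p.2.2.2) ∧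
    Nat.card C = 2 ^ (3 * (2 * s) + 1) := by
  set Φ : F × F × F × ZMod 2 → (F → ZMod 2) := fun p =>
      fun x : F =>
        Algebra.trace (ZMod 2) F (p.1 * x ^ 5 + p.2.1 * x ^ 3 + p.2.2.1 * x) + p.2.2.2 with hΦ
  have hinj : Function.Injective Φ := by
    rintro ⟨a, b, c, h⟩ ⟨a', b', c', h'⟩ heq
    have hx : ∀ x : F,
        Algebra.trace (ZMod 2) F (a * x ^ 5 + b * x ^ 3 + c * x) + h
          = Algebra.trace (ZMod 2) F (a' * x ^ 5 + b' * x ^ 3 + c' * x) + h' := by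
      intro x
      exact congrFun heq x
    have key := aux_key F s hs hcard (a - a') (b - b') (c - c') (h - h') ?_
    · obtain ⟨e1, e2, e3, e4⟩ := key
      have : a = a' := by linear_combination e1
      have : b = b' := by linear_combination e2
      have : c = c' := by linear_combination e3
      have : h = h' := by linear_combination e4
      simp_all
    · intro x
      have e : (a - a') * x ^ 5 + (b - b') * x ^ 3 + (c - c') * x
          = (a * x ^ 5 + b * x ^ 3 + c * x) - (a' * x ^ 5 + b' * x ^ 3 + c' * x) := by ring
      rw [e, map_sub]
      have := hx x
      linear_combination this
  constructor
  · exact hinj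
  · have hCrange : C = Set.range Φ := by
      rw [hC]
      ext f
      constructor
      · rintro ⟨a, b, c, h, rfl⟩
        exact ⟨(a, b, c, h), rfl⟩
      · rintro ⟨⟨a, b, c, h⟩, rfl⟩
        exact ⟨a, b, c, h, rfl⟩
    rw [hCrange, Nat.card_range_of_injective hinj]
    have : Nat.card (F × F × F × ZMod 2) = 2 ^ (2*s) * (2 ^ (2*s) * (2 ^ (2*s) * 2)) := by
      simp [Nat.card_prod, Nat.card_eq_fintype_card, hcard]
    rw [this]
    ring
end

section
/- For every pair (a, b) ∈ F_q × F_q with (a, b) ≠ (0, 0), the number of solutions x ∈ F_q of the equation a^4·x^16 + b^4·x^8 + b^2·x^2 + a·x = 0 is 1, 4, or 16; equivalently, the rank r of the quadratic form x ↦ Tr(a·x^5 + b·x^3) over F_2 satisfies r ∈ {m, m−2, m−4}. -/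
open Finset Polynomial

set_option linter.unusedSectionVars false
set_option maxHeartbeats 1000000

namespace Stmt13Aux

variable {F : Type} [Field F] [Fintype F] [CharP F 2]

def T (m : ℕ) (z : F) : F := ∑ i ∈ Finset.range m, z ^ 2 ^ i

lemma T_zero (m : ℕ) : T m (0 : F) = 0 := by
  simp only [T]
  rw [Finset.sum_eq_zero]
  intro i _
  exact zero_pow (Nat.two_pow_pos i).ne'

lemma T_add (m : ℕ) (y z : F) : T m (y + z) = T m y + T m z := by
  haveI : Fact (Nat.Prime 2) := ⟨Nat.prime_two⟩
  simp only [T, ← Finset.sum_add_distrib]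
  exact Finset.sum_congr rfl fun i _ => add_pow_char_pow y z 2 i

lemma T_sq (m : ℕ) (hm : Fintype.card F = 2 ^ m) (z : F) : T m (z ^ 2) = T m z := by
  have key : ∀ i, (z ^ 2) ^ 2 ^ i = z ^ 2 ^ (i + 1) := by
    intro i; rw [← pow_mul, pow_succ, mul_comm]
  have hz : z ^ 2 ^ m = z := by rw [← hm]; exact FiniteField.pow_card z
  calc T m (z ^ 2) = ∑ i ∈ Finset.range m, z ^ 2 ^ (i + 1) := by
        exact Finset.sum_congr rfl fun i _ => key i
    _ = (∑ i ∈ Finset.range m, z ^ 2 ^ i) + z ^ 2 ^ m - z ^ 2 ^ 0 := by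
        rw [← Finset.sum_range_succ]
        rw [Finset.sum_range_succ' (fun i => z ^ 2 ^ i) m]
        ring
    _ = T m z := by rw [hz]; simp [T]

lemma T_val (m : ℕ) (hm : Fintype.card F = 2 ^ m) (z : F) : T m z = 0 ∨ T m z = 1 := by
  have h1 : T m z ^ 2 = T m (z ^ 2) := by
    haveI : Fact (Nat.Prime 2) := ⟨Nat.prime_two⟩
    simp only [T]
    rw [show ∀ w : F, w ^ 2 = frobenius F 2 w from fun w => rfl, map_sum]
    exact Finset.sum_congr rfl fun i _ => by
      rw [frobenius_def, ← pow_mul, ← pow_mul, mul_comm]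
  have h2 : T m z ^ 2 = T m z := by rw [h1, T_sq m hm]
  have h3 : T m z * (T m z - 1) = 0 := by ring_nf; linear_combination h2
  rcases mul_eq_zero.mp h3 with h | h
  · exact Or.inl h
  · exact Or.inr (by linear_combination h)

lemma T_exists_ne (m : ℕ) (hm : 1 ≤ m) (hcard : Fintype.card F = 2 ^ m) :
    ∃ w : F, T m w ≠ 0 := by
  by_contra h
  push_neg at h
  set p : F[X] := ∑ i ∈ Finset.range m, X ^ 2 ^ i with hp
  have hpne : p ≠ 0 := by
    intro h0
    have hc : p.coeff 1 = 1 := by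
      rw [hp, Polynomial.finset_sum_coeff]
      rw [Finset.sum_eq_single 0]
      · simp
      · intro i hi hine
        rw [Polynomial.coeff_X_pow]
        simp only [ite_eq_right_iff]
        intro hpow
        have : i = 0 := by
          rcases Nat.eq_zero_or_pos i with h' | h'
          · exact h'
          · exfalso
            have : 2 ≤ 2 ^ i := Nat.one_lt_two_pow_iff.mpr h'.ne'
            omega
        exact absurd this hine
      · intro h0'
        exact absurd (Finset.mem_range.mpr hm) h0'
    rw [h0] at hc
    simp at hc
  have hroots : (Finset.univ : Finset F).val ⊆ p.roots := by
    intro x hx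
    rw [Polynomial.mem_roots hpne]
    have := h x
    simp only [Polynomial.IsRoot, hp, Polynomial.eval_finset_sum, Polynomial.eval_pow,
      Polynomial.eval_X]
    simpa [T] using this
  have hdeg : p.natDegree ≤ 2 ^ (m - 1) := by
    apply Polynomial.natDegree_sum_le_of_forall_le
    intro i hi
    rw [Polynomial.natDegree_X_pow]
    exact Nat.pow_le_pow_right (by norm_num) (Nat.le_sub_one_of_lt (Finset.mem_range.mp hi))
  have hle := Polynomial.card_le_degree_of_subset_roots hroots
  rw [Finset.card_univ, hcard] at hle
  have h2 : 2 ^ m ≤ 2 ^ (m - 1) := hle.trans hdeg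
  have := Nat.pow_le_pow_iff_right (a := 2) (by norm_num) |>.mp h2
  omega

/-- sign character on `ZMod 2` -/
def e (t : ZMod 2) : ℤ := if t = 0 then 1 else -1

lemma e_add : ∀ s t : ZMod 2, e (s + t) = e s * e t := by decide
lemma e_flip : ∀ t : ZMod 2, e (t + 1) = -e t := by decide
lemma e_zero : e 0 = 1 := rfl

open Classical in
noncomputable def tau (m : ℕ) (z : F) : ZMod 2 := if T m z = 0 then 0 else 1

lemma tau_congr {m : ℕ} {y z : F} (h : T m y = T m z) : tau m y = tau m z := by
  unfold tau; rw [h]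

lemma tau_zero (m : ℕ) : tau m (0 : F) = 0 := by simp [tau, T_zero]

lemma tau_add (m : ℕ) (hm : Fintype.card F = 2 ^ m) (y z : F) :
    tau m (y + z) = tau m y + tau m z := by
  have h2 : (1 : F) + 1 = 0 := by
    have := CharP.cast_eq_zero F 2
    push_cast at this
    linear_combination this
  rcases T_val m hm y with hy | hy <;> rcases T_val m hm z with hz | hz
  · have hyz : T m (y + z) = 0 := by rw [T_add, hy, hz, add_zero]
    simp [tau, hy, hz, hyz]
  · have hyz : T m (y + z) = 1 := by rw [T_add, hy, hz, zero_add]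
    simp [tau, hy, hz, hyz]
  · have hyz : T m (y + z) = 1 := by rw [T_add, hy, hz, add_zero]
    simp [tau, hy, hz, hyz]
  · have hyz : T m (y + z) = 0 := by rw [T_add, hy, hz, h2]
    have h1 : T m y ≠ 0 := by rw [hy]; exact one_ne_zero
    have h2' : T m z ≠ 0 := by rw [hz]; exact one_ne_zero
    simp only [tau, if_pos hyz, if_neg h1, if_neg h2']
    decide

lemma tau_eq_one {m : ℕ} {z : F} (h : T m z ≠ 0) : tau m z = 1 := by simp [tau, h]

section Main

variable (m : ℕ) (a b : F)

def phi (x : F) : F := a ^ 4 * x ^ 16 + b ^ 4 * x ^ 8 + b ^ 2 * x ^ 2 + a * x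

def M (u : F) : F := a * u ^ 4 + b * u ^ 2 + (b * u) ^ 2 ^ (m - 1) + (a * u) ^ 2 ^ (m - 2)

lemma pc (hcard : Fintype.card F = 2 ^ m) (z : F) : z ^ 2 ^ m = z := by
  rw [← hcard]; exact FiniteField.pow_card z

lemma pow4_add (y z : F) : (y + z) ^ 4 = y ^ 4 + z ^ 4 := by
  haveI : Fact (Nat.Prime 2) := ⟨Nat.prime_two⟩
  have := add_pow_char_pow y z 2 2
  norm_num at this
  exact this

lemma phi_add (x y : F) : phi a b (x + y) = phi a b x + phi a b y := by
  haveI : Fact (Nat.Prime 2) := ⟨Nat.prime_two⟩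
  have e16 := add_pow_char_pow x y 2 4
  have e8 := add_pow_char_pow x y 2 3
  have e2 := add_pow_char_pow x y 2 1
  norm_num at e16 e8 e2
  simp only [phi, e16, e8, e2]
  ring

lemma M_pow4 (hm : 2 ≤ m) (hcard : Fintype.card F = 2 ^ m) (u : F) :
    (M m a b u) ^ 4 = phi a b u := by
  have hb : ((b * u) ^ 2 ^ (m - 1)) ^ 4 = b ^ 2 * u ^ 2 := by
    rw [← pow_mul]
    have h1 : 2 ^ (m - 1) * 4 = 2 ^ m * 2 := by
      rw [show (4 : ℕ) = 2 ^ 2 from rfl, ← pow_add, ← pow_succ]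
      congr 1
      omega
    rw [h1, pow_mul, pc m hcard (b * u)]
    ring
  have ha : ((a * u) ^ 2 ^ (m - 2)) ^ 4 = a * u := by
    rw [← pow_mul]
    have h1 : 2 ^ (m - 2) * 4 = 2 ^ m := by
      rw [show (4 : ℕ) = 2 ^ 2 from rfl, ← pow_add]
      congr 1
      omega
    rw [h1, pc m hcard]
  simp only [M, phi]
  rw [pow4_add, pow4_add, pow4_add, hb, ha]
  ring

lemma B_ident (hm : 2 ≤ m) (hcard : Fintype.card F = 2 ^ m) (x u : F) :
    T m (a * (x ^ 4 * u + x * u ^ 4) + b * (x ^ 2 * u + x * u ^ 2)) =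
      T m (x * M m a b u) := by
  have t1 : T m (a * (x ^ 4 * u)) = T m (x * (a * u) ^ 2 ^ (m - 2)) := by
    have hw : (x * (a * u) ^ 2 ^ (m - 2)) ^ 4 = a * (x ^ 4 * u) := by
      rw [mul_pow, ← pow_mul]
      have h1 : 2 ^ (m - 2) * 4 = 2 ^ m := by
        rw [show (4 : ℕ) = 2 ^ 2 from rfl, ← pow_add]
        congr 1
        omega
      rw [h1, pc m hcard]
      ring
    calc T m (a * (x ^ 4 * u)) = T m (((x * (a * u) ^ 2 ^ (m - 2)) ^ 2) ^ 2) := by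
          rw [← pow_mul]; norm_num; rw [hw]
      _ = T m (x * (a * u) ^ 2 ^ (m - 2)) := by rw [T_sq m hcard, T_sq m hcard]
  have t3 : T m (b * (x ^ 2 * u)) = T m (x * (b * u) ^ 2 ^ (m - 1)) := by
    have hw : (x * (b * u) ^ 2 ^ (m - 1)) ^ 2 = b * (x ^ 2 * u) := by
      rw [mul_pow, ← pow_mul]
      have h1 : 2 ^ (m - 1) * 2 = 2 ^ m := by
        rw [← pow_succ]
        congr 1
        omega
      rw [h1, pc m hcard]
      ring
    calc T m (b * (x ^ 2 * u)) = T m ((x * (b * u) ^ 2 ^ (m - 1)) ^ 2) := by rw [hw]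
      _ = T m (x * (b * u) ^ 2 ^ (m - 1)) := T_sq m hcard _
  have decompL : a * (x ^ 4 * u + x * u ^ 4) + b * (x ^ 2 * u + x * u ^ 2) =
      (a * (x ^ 4 * u) + a * (x * u ^ 4)) + (b * (x ^ 2 * u) + b * (x * u ^ 2)) := by ring
  have decompR : x * M m a b u =
      (x * (a * u) ^ 2 ^ (m - 2) + x * (a * u ^ 4)) +
        (x * (b * u) ^ 2 ^ (m - 1) + x * (b * u ^ 2)) := by
    simp only [M]; ring
  rw [decompL, T_add, T_add, T_add, decompR, T_add, T_add, T_add, t1, t3,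
    show a * (x * u ^ 4) = x * (a * u ^ 4) by ring,
    show b * (x * u ^ 2) = x * (b * u ^ 2) by ring]

lemma Q_exp (x u : F) : a * (x + u) ^ 5 + b * (x + u) ^ 3 =
    (a * x ^ 5 + b * x ^ 3) + (a * u ^ 5 + b * u ^ 3) +
      (a * (x ^ 4 * u + x * u ^ 4) + b * (x ^ 2 * u + x * u ^ 2)) := by
  have h2 : (2 : F) = 0 := by exact_mod_cast CharP.cast_eq_zero F 2
  linear_combination (a * (2 * x ^ 4 * u + 5 * x ^ 3 * u ^ 2 + 5 * x ^ 2 * u ^ 3 + 2 * x * u ^ 4)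
    + b * (x ^ 2 * u + x * u ^ 2)) * h2

end Main

end Stmt13Aux

set_option maxHeartbeats 1600000 in
theorem stmt_13 (s : ℕ) (hs : 2 ≤ s)
    (F : Type) [Field F] [Fintype F] [Algebra (ZMod 2) F]
    (hcard : Fintype.card F = 2 ^ (2 * s)) :
    ∀ a b : F, (a, b) ≠ (0, 0) →
      Nat.card {x : F | a ^ 4 * x ^ 16 + b ^ 4 * x ^ 8 + b ^ 2 * x ^ 2 + a * x = 0} ∈
        ({1, 4, 16} : Set ℕ) := by
  classical
  intro a b hab
  haveI : Fact (Nat.Prime 2) := ⟨Nat.prime_two⟩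
  haveI : CharP F 2 := charP_of_injective_algebraMap (algebraMap (ZMod 2) F).injective 2
  open Stmt13Aux in
  set m := 2 * s with hmdef
  have hm : 2 ≤ m := by omega
  have hcardF : Fintype.card F = 2 ^ m := hcard
  -- the solution space as a `ZMod 2`-submodule
  let K : Submodule (ZMod 2) F :=
    { carrier := {x : F | a ^ 4 * x ^ 16 + b ^ 4 * x ^ 8 + b ^ 2 * x ^ 2 + a * x = 0}
      add_mem' := by
        intro x y hx hy
        have hx' : phi a b x = 0 := hx
        have hy' : phi a b y = 0 := hy
        show phi a b (x + y) = 0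
        rw [phi_add a b x y, hx', hy', add_zero]
      zero_mem' := by
        show phi a b 0 = 0
        simp [phi]
      smul_mem' := by
        intro c x hx
        fin_cases c
        · show ((0 : ZMod 2) • x) ∈ _
          rw [zero_smul]
          show phi a b 0 = 0
          simp [phi]
        · show ((1 : ZMod 2) • x) ∈ _
          rw [one_smul]
          exact hx }
  have hmemK : ∀ x : F, x ∈ K ↔ phi a b x = 0 := fun x => Iff.rfl
  haveI : Fintype K := Fintype.ofFinite K
  have hcardK : Nat.card ↥K = 2 ^ Module.finrank (ZMod 2) ↥K := by
    rw [Nat.card_eq_fintype_card, Module.card_eq_pow_finrank (K := ZMod 2) (V := ↥K), ZMod.card]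
  -- cardinality bound via polynomial roots
  have hK16 : Nat.card ↥K ≤ 16 := by
    set p : Polynomial F := Polynomial.C (a ^ 4) * Polynomial.X ^ 16 +
      Polynomial.C (b ^ 4) * Polynomial.X ^ 8 +
      Polynomial.C (b ^ 2) * Polynomial.X ^ 2 + Polynomial.C a * Polynomial.X with hp
    have hab' : a ≠ 0 ∨ b ≠ 0 := by
      by_contra h
      push_neg at h
      exact hab (by simp [h.1, h.2])
    have hpne : p ≠ 0 := by
      intro h0
      rcases hab' with ha | hb
      · have hc : p.coeff 1 = a := by
          simp only [hp, Polynomial.coeff_add, Polynomial.coeff_C_mul, Polynomial.coeff_X_pow,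
            Polynomial.coeff_X_one]
          norm_num
        rw [h0] at hc
        simp only [Polynomial.coeff_zero] at hc
        exact ha hc.symm
      · have hc : p.coeff 2 = b ^ 2 := by
          simp only [hp, Polynomial.coeff_add, Polynomial.coeff_C_mul, Polynomial.coeff_X_pow,
            Polynomial.coeff_X]
          norm_num
        rw [h0] at hc
        simp only [Polynomial.coeff_zero] at hc
        exact hb ((pow_eq_zero_iff two_ne_zero).mp hc.symm)
    have hpeval : ∀ x : F, p.eval x = phi a b x := by
      intro x
      simp [hp, phi]
    have hZ : Nat.card ↥K = (Finset.univ.filter (fun u : F => u ∈ K)).card := by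
      rw [← Fintype.card_coe (Finset.univ.filter (fun u : F => u ∈ K)),
        ← Nat.card_eq_fintype_card]
      exact Nat.card_congr (Equiv.subtypeEquivRight (by intro x; simp))
    rw [hZ]
    have hsub : (Finset.univ.filter (fun u : F => u ∈ K)).val ⊆ p.roots := by
      intro x hx
      rw [Finset.mem_val, Finset.mem_filter] at hx
      rw [Polynomial.mem_roots hpne]
      show p.IsRoot x
      rw [Polynomial.IsRoot, hpeval x]
      exact (hmemK x).mp hx.2
    have hdeg : p.natDegree ≤ 16 := by
      rw [hp]
      compute_degree
    exact (Polynomial.card_le_degree_of_subset_roots hsub).trans hdeg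
  -- M vanishes exactly on K
  have hMzero : ∀ u ∈ K, M m a b u = 0 := by
    intro u hu
    have h4 : (M m a b u) ^ 4 = 0 := by
      rw [M_pow4 m a b hm hcardF]
      exact (hmemK u).mp hu
    exact pow_eq_zero_iff (by norm_num) |>.mp h4
  have hMne : ∀ u ∉ K, M m a b u ≠ 0 := by
    intro u hu hM
    exact hu ((hmemK u).mpr (by rw [← M_pow4 m a b hm hcardF, hM]; norm_num))
  -- the linear functional on K extending the quadratic form
  have two_zmod : (2 : ZMod 2) = 0 := rfl
  have add_self_zmod : ∀ t : ZMod 2, t + t = 0 := by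
    intro t
    have h2t : (2 : ZMod 2) * t = 0 := by rw [two_zmod, zero_mul]
    linear_combination h2t
  let lam : ↥K →ₗ[ZMod 2] ZMod 2 :=
    { toFun := fun u => tau m (a * (u : F) ^ 5 + b * (u : F) ^ 3)
      map_add' := by
        intro u v
        show tau m (a * ((u : F) + (v : F)) ^ 5 + b * ((u : F) + (v : F)) ^ 3) = _
        rw [Q_exp a b (u : F) (v : F), tau_add m hcardF, tau_add m hcardF,
          tau_congr (B_ident m a b hm hcardF (u : F) (v : F)), hMzero (v : F) v.2,
          mul_zero, tau_zero, add_zero]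
      map_smul' := by
        intro c u
        fin_cases c
        · show tau m (a * (((0 : ZMod 2) • u : ↥K) : F) ^ 5 + b * (((0 : ZMod 2) • u : ↥K) : F) ^ 3) = (0 : ZMod 2) * _
          rw [zero_smul]
          norm_num [tau_zero]
        · show tau m (a * (((1 : ZMod 2) • u : ↥K) : F) ^ 5 + b * (((1 : ZMod 2) • u : ↥K) : F) ^ 3) = (1 : ZMod 2) * _
          rw [one_smul]
          norm_num }
  obtain ⟨l, hl⟩ := LinearMap.exists_extend lam
  have hlK : ∀ u : ↥K, l (u : F) = tau m (a * (u : F) ^ 5 + b * (u : F) ^ 3) :=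
    fun u => DFunLike.congr_fun hl u
  -- the adjusted quadratic form
  set Q2 : F → ZMod 2 := fun x => tau m (a * x ^ 5 + b * x ^ 3) + l x with hQ2
  have master : ∀ x u : F,
      Q2 x + Q2 (x + u) = tau m (a * u ^ 5 + b * u ^ 3) + l u + tau m (x * M m a b u) := by
    intro x u
    have h1 : Q2 (x + u) = (tau m (a * x ^ 5 + b * x ^ 3) + l x) +
        ((tau m (a * u ^ 5 + b * u ^ 3) + l u) + tau m (x * M m a b u)) := by
      show tau m (a * (x + u) ^ 5 + b * (x + u) ^ 3) + l (x + u) = _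
      rw [Q_exp a b x u, tau_add m hcardF, tau_add m hcardF,
        tau_congr (B_ident m a b hm hcardF x u), map_add]
      ring
    rw [h1, show Q2 x = tau m (a * x ^ 5 + b * x ^ 3) + l x from rfl]
    linear_combination (tau m (a * x ^ 5 + b * x ^ 3) + l x) * two_zmod
  have hKshift : ∀ u ∈ K, ∀ x : F, Q2 x + Q2 (x + u) = 0 := by
    intro u hu x
    rw [master x u, hMzero u hu, mul_zero, tau_zero, add_zero, hlK ⟨u, hu⟩]
    exact add_self_zmod _
  -- the character sum
  set S : ℤ := ∑ x : F, e (Q2 x) with hS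
  have hZ_abs : Nat.card ↥K = (Finset.univ.filter (fun u : F => u ∈ K)).card := by
    rw [← Fintype.card_coe (Finset.univ.filter (fun u : F => u ∈ K)),
      ← Nat.card_eq_fintype_card]
    exact Nat.card_congr (Equiv.subtypeEquivRight (by intro x; simp))
  have hinner_mem : ∀ u ∈ K, ∑ x : F, e (Q2 x + Q2 (x + u)) = (2 : ℤ) ^ m := by
    intro u hu
    have : ∀ x : F, e (Q2 x + Q2 (x + u)) = 1 := by
      intro x
      rw [hKshift u hu x, e_zero]
    rw [Finset.sum_congr rfl (fun x _ => this x), Finset.sum_const, Finset.card_univ, hcardF]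
    push_cast
    ring
  have hinner_nmem : ∀ u ∉ K, ∑ x : F, e (Q2 x + Q2 (x + u)) = 0 := by
    intro u hu
    obtain ⟨w, hw⟩ := T_exists_ne m (by omega) hcardF
    set x₀ : F := w * (M m a b u)⁻¹ with hx₀def
    have hx0 : tau m (x₀ * M m a b u) = 1 := by
      apply tau_eq_one
      rw [show x₀ * M m a b u = w by
        rw [hx₀def, mul_assoc, inv_mul_cancel₀ (hMne u hu), mul_one]]
      exact hw
    have hshift : ∀ x : F, Q2 (x + x₀) + Q2 ((x + x₀) + u) = (Q2 x + Q2 (x + u)) + 1 := by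
      intro x
      have hsplit : tau m ((x + x₀) * M m a b u) =
          tau m (x * M m a b u) + tau m (x₀ * M m a b u) := by
        rw [add_mul, tau_add m hcardF]
      rw [master (x + x₀) u, master x u, hsplit, hx0]
      ring
    have hre : ∑ x : F, e (Q2 x + Q2 (x + u)) =
        ∑ x : F, e (Q2 (x + x₀) + Q2 ((x + x₀) + u)) := by
      refine (Fintype.sum_equiv (Equiv.addRight x₀) _ _ ?_).symm
      intro x
      simp [Equiv.coe_addRight]
    have hre2 : ∑ x : F, e (Q2 (x + x₀) + Q2 ((x + x₀) + u)) =
        -∑ x : F, e (Q2 x + Q2 (x + u)) := by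
      rw [← Finset.sum_neg_distrib]
      refine Finset.sum_congr rfl fun x _ => ?_
      rw [hshift x, e_flip]
    have := hre.trans hre2
    linarith
  have hSsq : S * S = 2 ^ (m + Module.finrank (ZMod 2) ↥K) := by
    have step1 : S * S = ∑ x : F, ∑ y : F, e (Q2 x) * e (Q2 y) := by
      rw [hS, Finset.sum_mul_sum]
    have step2 : ∀ x : F, ∑ y : F, e (Q2 x) * e (Q2 y) = ∑ u : F, e (Q2 x + Q2 (x + u)) := by
      intro x
      rw [← Equiv.sum_comp (Equiv.addLeft x) (fun y => e (Q2 x) * e (Q2 y))]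
      refine Finset.sum_congr rfl fun u _ => ?_
      simp only [Equiv.coe_addLeft]
      rw [← e_add]
    have step3 : S * S = ∑ u : F, ∑ x : F, e (Q2 x + Q2 (x + u)) := by
      rw [step1, Finset.sum_congr rfl (fun x _ => step2 x), Finset.sum_comm]
    have step4 : S * S = ∑ u : F, if u ∈ K then (2 : ℤ) ^ m else 0 := by
      rw [step3]
      refine Finset.sum_congr rfl fun u _ => ?_
      by_cases hu : u ∈ K
      · rw [if_pos hu, hinner_mem u hu]
      · rw [if_neg hu, hinner_nmem u hu]
    rw [step4, ← Finset.sum_filter, Finset.sum_const, ← hZ_abs, hcardK]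
    push_cast
    rw [pow_add]
    ring
  -- parity of the dimension
  set k : ℕ := Module.finrank (ZMod 2) ↥K with hk
  have hnn : S.natAbs * S.natAbs = 2 ^ (m + k) := by
    have h1 : ((S.natAbs * S.natAbs : ℕ) : ℤ) = ((2 ^ (m + k) : ℕ) : ℤ) := by
      rw [Int.natAbs_mul_self]
      push_cast
      rw [hSsq]
    exact_mod_cast h1
  have heven : Even (m + k) := by
    have hfac : (S.natAbs * S.natAbs).factorization 2 = m + k := by
      rw [hnn, Nat.Prime.factorization_pow Nat.prime_two, Finsupp.single_eq_same]
    rw [show S.natAbs * S.natAbs = S.natAbs ^ 2 by ring, Nat.factorization_pow] at hfac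
    simp only [Finsupp.smul_apply, smul_eq_mul] at hfac
    exact ⟨S.natAbs.factorization 2, by omega⟩
  have hkeven : Even k := by
    have hme : Even m := ⟨s, by omega⟩
    rcases Nat.even_add.mp heven with h
    exact h.mp hme
  have hk4 : k ≤ 4 := by
    have h16 : (2 : ℕ) ^ k ≤ 2 ^ 4 := by
      rw [← hcardK]
      exact hK16
    exact (Nat.pow_le_pow_iff_right (by norm_num)).mp h16
  -- conclusion
  have hfinal : Nat.card {x : F | a ^ 4 * x ^ 16 + b ^ 4 * x ^ 8 + b ^ 2 * x ^ 2 + a * x = 0} =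
      2 ^ k := by
    rw [← hcardK]
    rfl
  rw [hfinal]
  obtain ⟨j, hj⟩ := hkeven
  have hj2 : j ≤ 2 := by omega
  interval_cases j <;> rw [hj] <;> norm_num
end

section
/- For every triple (a, b, c) ∈ F_q × F_q × F_q with (a, b, c) ≠ (0, 0, 0), the number of x ∈ F_q with Tr(a·x^5 + b·x^3 + c·x) = 1 belongs to the set {2^(2s−1), 2^(2s−1) − 2^(s−1), 2^(2s−1) + 2^(s−1), 2^(2s−1) − 2^s, 2^(2s−1) + 2^s, 2^(2s−1) − 2^(s+1), 2^(2s−1) + 2^(s+1)}; equivalently, the exponential sum S(a,b,c) = Σ_{x ∈ F_q} (−1)^{Tr(a·x^5 + b·x^3 + c·x)} belongs to {0, ±2^s, ±2^(s+1), ±2^(s+2)}. -/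
noncomputable def chi : ZMod 2 → ℤ := fun u => if u = 0 then 1 else -1

lemma chi_add (u v : ZMod 2) : chi (u + v) = chi u * chi v := by revert u v; decide

lemma evensplit {G : Type} [AddCommGroup G] [Fintype G] (g : G → ZMod 2)
    (hadd : ∀ x y, g (x + y) = g x + g y) (x0 : G) (hx0 : g x0 = 1) :
    ∑ x, chi (g x) = 0 := by
  have h1 : ∑ x, chi (g (x + x0)) = ∑ x, chi (g x) :=
    Fintype.sum_equiv (Equiv.addRight x0) _ _ (fun x => rfl)
  have h2 : ∀ x, chi (g (x + x0)) = - chi (g x) := by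
    intro x
    rw [hadd, hx0, chi_add]
    have : chi 1 = -1 := rfl
    rw [this]; ring
  have h3 : ∑ x, chi (g (x + x0)) = - ∑ x, chi (g x) := by
    rw [← Finset.sum_neg_distrib]
    exact Finset.sum_congr rfl (fun x _ => h2 x)
  linarith [h1, h3]

lemma sum_chi_eq {G : Type} [Fintype G] (g : G → ZMod 2) :
    ∑ x, chi (g x) =
      (Fintype.card G : ℤ) - 2 * ((Finset.univ.filter (fun x => g x = 1)).card : ℤ) := by
  have h : ∀ x, chi (g x) = 1 - 2 * (if g x = 1 then (1 : ℤ) else 0) := by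
    intro x
    have : ∀ u : ZMod 2, chi u = 1 - 2 * (if u = 1 then (1 : ℤ) else 0) := by decide
    exact this _
  rw [Finset.sum_congr rfl (fun x _ => h x), Finset.sum_sub_distrib, ← Finset.mul_sum]
  simp [Finset.sum_boole]

section aux
variable {F : Type} [Field F] [Fintype F] [Algebra (ZMod 2) F]

noncomputable def sqAlg (F : Type) [Field F] [Fintype F] [Algebra (ZMod 2) F] :
    F ≃ₐ[ZMod 2] F := by
  haveI : CharP F 2 := charP_of_injective_ringHom (algebraMap (ZMod 2) F).injective 2
  haveI : Fact (Nat.Prime 2) := ⟨Nat.prime_two⟩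
  exact AlgEquiv.ofBijective
    { toRingHom := frobenius F 2
      commutes' := fun c => by
        simp [frobenius_def]
        rw [← map_pow, ZMod.pow_card c] }
    (Finite.injective_iff_bijective.mp (frobenius_inj F 2))

lemma sqAlg_apply (z : F) : sqAlg F z = z ^ 2 := rfl

lemma trace_sq (z : F) : Algebra.trace (ZMod 2) F (z ^ 2) = Algebra.trace (ZMod 2) F z := by
  have := Algebra.trace_eq_of_algEquiv (sqAlg F) z
  simpa [sqAlg, frobenius_def] using this

local notation "Tr" => Algebra.trace (ZMod 2) F

lemma trace_hits_one {c : F} (hc : c ≠ 0) :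
    ∃ x : F, Tr (c * x) = 1 := by
  haveI : FiniteDimensional (ZMod 2) F := Module.Finite.of_finite
  by_contra h
  push_neg at h
  have h0 : ∀ x : F, Tr (c * x) = 0 := by
    intro x
    have hu : ∀ u : ZMod 2, u ≠ 1 → u = 0 := by decide
    exact hu _ (h x)
  exact hc ((traceForm_nondegenerate (ZMod 2) F).1 c (fun x => by
    rw [Algebra.traceForm_apply]; exact h0 x))

lemma key_identity (a b c x w : F) :
    Tr (a*x^5 + b*x^3 + c*x) + Tr (a*(x+w)^5 + b*(x+w)^3 + c*(x+w))
      = Tr (a*w^5 + b*w^3 + c*w) + Tr (x^4 * (a*w + b^2*w^2 + b^4*w^8 + a^4*w^16)) := by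
  haveI : CharP F 2 := charP_of_injective_ringHom (algebraMap (ZMod 2) F).injective 2
  have h2 : (2:F) = 0 := by exact_mod_cast CharP.cast_eq_zero F 2
  have hD : (a*x^5 + b*x^3 + c*x) + (a*(x+w)^5 + b*(x+w)^3 + c*(x+w)) + (a*w^5 + b*w^3 + c*w)
      = a*x^4*w + a*x*w^4 + b*x^2*w + b*x*w^2 := by
    linear_combination (a*(x^5+w^5+2*x^4*w+5*x^3*w^2+5*x^2*w^3+2*x*w^4)
      + b*(x^3+w^3+x^2*w+x*w^2) + c*(x+w)) * h2
  have t2 : Tr (a*x*w^4) = Tr (a^4*x^4*w^16) := by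
    rw [show a^4*x^4*w^16 = ((a*x*w^4)^2)^2 by ring, trace_sq, trace_sq]
  have t3 : Tr (b*x^2*w) = Tr (b^2*x^4*w^2) := by
    rw [show b^2*x^4*w^2 = (b*x^2*w)^2 by ring, trace_sq]
  have t4 : Tr (b*x*w^2) = Tr (b^4*x^4*w^8) := by
    rw [show b^4*x^4*w^8 = ((b*x*w^2)^2)^2 by ring, trace_sq, trace_sq]
  have e : Tr (a*x^5 + b*x^3 + c*x) + Tr (a*(x+w)^5 + b*(x+w)^3 + c*(x+w))
        + Tr (a*w^5 + b*w^3 + c*w)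
      = Tr (a*x^4*w) + Tr (a*x*w^4) + Tr (b*x^2*w) + Tr (b*x*w^2) := by
    rw [← map_add, ← map_add, hD]
    simp [map_add]
  have e2 : Tr (x^4 * (a*w + b^2*w^2 + b^4*w^8 + a^4*w^16))
      = Tr (a*x^4*w) + Tr (a^4*x^4*w^16) + Tr (b^2*x^4*w^2) + Tr (b^4*x^4*w^8) := by
    rw [show x^4 * (a*w + b^2*w^2 + b^4*w^8 + a^4*w^16)
        = a*x^4*w + a^4*x^4*w^16 + b^2*x^4*w^2 + b^4*x^4*w^8 by ring]
    simp [map_add]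
  have hfin : ∀ u v p q : ZMod 2, u + v + p = q → u + v = p + q := by decide
  apply hfin
  rw [e, e2, t2, t3, t4]

open scoped Classical in
lemma innerSumChi (a b : F) (w : F) :
    ∑ x : F, chi (Tr (x^4 * (a*w + b^2*w^2 + b^4*w^8 + a^4*w^16)))
      = if a*w + b^2*w^2 + b^4*w^8 + a^4*w^16 = 0 then (Fintype.card F : ℤ) else 0 := by
  classical
  haveI : CharP F 2 := charP_of_injective_ringHom (algebraMap (ZMod 2) F).injective 2
  set Pw := a*w + b^2*w^2 + b^4*w^8 + a^4*w^16 with hPw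
  by_cases h : Pw = 0
  · rw [if_pos h]
    simp [h, chi]
  · rw [if_neg h]
    have hadd : ∀ x y : F, Tr ((x+y)^4 * Pw) = Tr (x^4 * Pw) + Tr (y^4 * Pw) := by
      intro x y
      have h4 : (x+y)^4 = x^4 + y^4 := by
        rw [show (x+y)^4 = ((x+y)^2)^2 by ring, CharTwo.add_sq, CharTwo.add_sq]
        ring
      rw [h4, add_mul, map_add]
    obtain ⟨y, hy⟩ := trace_hits_one h
    obtain ⟨u, hu⟩ := (sqAlg F).surjective y
    obtain ⟨x0, hx0⟩ := (sqAlg F).surjective u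
    rw [sqAlg_apply] at hu hx0
    have hx04 : x0^4 = y := by rw [show x0^4 = (x0^2)^2 by ring, hx0, hu]
    exact evensplit (fun x => Tr (x^4 * Pw)) hadd x0
      (by show Tr (x0^4 * Pw) = 1; rw [hx04, mul_comm]; exact hy)

lemma main_sum (a b c : F) :
    (∑ x : F, chi (Tr (a*x^5 + b*x^3 + c*x))) * (∑ x : F, chi (Tr (a*x^5 + b*x^3 + c*x)))
      = ∑ w : F, (chi (Tr (a*w^5 + b*w^3 + c*w)) *
          ∑ x : F, chi (Tr (x^4 * (a*w + b^2*w^2 + b^4*w^8 + a^4*w^16)))) := by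
  rw [Finset.sum_mul_sum]
  have step : ∀ x : F, ∑ y : F, chi (Tr (a*x^5 + b*x^3 + c*x)) * chi (Tr (a*y^5 + b*y^3 + c*y))
      = ∑ w : F, chi (Tr (a*w^5 + b*w^3 + c*w)) *
          chi (Tr (x^4 * (a*w + b^2*w^2 + b^4*w^8 + a^4*w^16))) := by
    intro x
    rw [← Fintype.sum_equiv (Equiv.addLeft x)
      (fun w => chi (Tr (a*x^5 + b*x^3 + c*x)) * chi (Tr (a*(x+w)^5 + b*(x+w)^3 + c*(x+w))))
      (fun y => chi (Tr (a*x^5 + b*x^3 + c*x)) * chi (Tr (a*y^5 + b*y^3 + c*y)))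
      (fun w => rfl)]
    apply Finset.sum_congr rfl
    intro w _
    rw [← chi_add, ← chi_add, key_identity a b c x w]
  rw [Finset.sum_congr rfl (fun x _ => step x), Finset.sum_comm]
  apply Finset.sum_congr rfl
  intro w _
  rw [Finset.mul_sum]

open Polynomial in
open scoped Classical in
lemma K_card_le (a b : F) (hab : ¬(a = 0 ∧ b = 0)) :
    (Finset.univ.filter
      (fun w : F => a*w + b^2*w^2 + b^4*w^8 + a^4*w^16 = 0)).card ≤ 16 := by
  classical
  set Q : F[X] := C a * X + C (b^2) * X^2 + C (b^4) * X^8 + C (a^4) * X^16 with hQdef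
  have hQ0 : Q ≠ 0 := by
    intro hQ
    rcases not_and_or.mp hab with ha | hb
    · apply ha
      have h16 := congrArg (fun p => Polynomial.coeff p 16) hQ
      simp only [hQdef, coeff_add, coeff_C_mul, coeff_X, coeff_X_pow, coeff_zero] at h16
      norm_num at h16
      exact h16
    · apply hb
      have h8 := congrArg (fun p => Polynomial.coeff p 8) hQ
      simp only [hQdef, coeff_add, coeff_C_mul, coeff_X, coeff_X_pow, coeff_zero] at h8
      norm_num at h8
      exact h8
  have hdeg : Q.natDegree ≤ 16 := by
    rw [hQdef]; compute_degree
  have hsub : (Finset.univ.filter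
      (fun w : F => a*w + b^2*w^2 + b^4*w^8 + a^4*w^16 = 0)) ⊆ Q.roots.toFinset := by
    intro w hw
    rw [Finset.mem_filter] at hw
    rw [Multiset.mem_toFinset, Polynomial.mem_roots hQ0]
    show Q.eval w = 0
    simp [hQdef]
    linear_combination hw.2
  calc (Finset.univ.filter _).card ≤ Q.roots.toFinset.card := Finset.card_le_card hsub
    _ ≤ Multiset.card Q.roots := Q.roots.toFinset_card_le
    _ ≤ Q.natDegree := Q.card_roots'
    _ ≤ 16 := hdeg

open scoped Classical in
lemma K_pow (a b : F) (n : ℕ) (hcard : Fintype.card F = 2^n) :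
    ∃ e : ℕ, (Finset.univ.filter
      (fun w : F => a*w + b^2*w^2 + b^4*w^8 + a^4*w^16 = 0)).card = 2^e := by
  classical
  haveI : CharP F 2 := charP_of_injective_ringHom (algebraMap (ZMod 2) F).injective 2
  have hsq : ∀ u v : F, (u+v)^2 = u^2+v^2 := CharTwo.add_sq
  have h8 : ∀ u v : F, (u+v)^8 = u^8+v^8 := by
    intro u v
    rw [show (u+v)^8 = (((u+v)^2)^2)^2 by ring, hsq, hsq, hsq]; ring
  have h16 : ∀ u v : F, (u+v)^16 = u^16+v^16 := by
    intro u v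
    rw [show (u+v)^16 = ((u+v)^8)^2 by ring, h8, hsq]; ring
  set K : AddSubgroup F :=
    { carrier := {w : F | a*w + b^2*w^2 + b^4*w^8 + a^4*w^16 = 0}
      add_mem' := by
        intro u v hu hv
        simp only [Set.mem_setOf_eq] at *
        rw [hsq, h8, h16]
        linear_combination hu + hv
      zero_mem' := by simp
      neg_mem' := by
        intro u hu
        simpa [CharTwo.neg_eq] using hu } with hK
  have hmem : ∀ w : F, w ∈ K ↔ a*w + b^2*w^2 + b^4*w^8 + a^4*w^16 = 0 := fun w => Iff.rfl
  have h1 : Nat.card K = (Finset.univ.filter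
      (fun w : F => a*w + b^2*w^2 + b^4*w^8 + a^4*w^16 = 0)).card := by
    rw [Nat.card_eq_fintype_card, Fintype.card_subtype]
    apply Finset.card_bij (fun w _ => w) <;> simp [hmem]
  have hdvd : Nat.card K ∣ Nat.card F := AddSubgroup.card_addSubgroup_dvd_card K
  rw [Nat.card_eq_fintype_card (α := F), hcard, h1] at hdvd
  obtain ⟨e, _, he⟩ := (Nat.dvd_prime_pow Nat.prime_two).mp hdvd
  exact ⟨e, he⟩

open scoped Classical in
lemma Ksum_zero (a b c w0 : F)
    (hw0 : a*w0 + b^2*w0^2 + b^4*w0^8 + a^4*w0^16 = 0)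
    (hfw0 : Tr (a*w0^5 + b*w0^3 + c*w0) = 1) :
    ∑ w ∈ Finset.univ.filter (fun w : F => a*w + b^2*w^2 + b^4*w^8 + a^4*w^16 = 0),
      chi (Tr (a*w^5 + b*w^3 + c*w)) = 0 := by
  haveI : CharP F 2 := charP_of_injective_ringHom (algebraMap (ZMod 2) F).injective 2
  have hsq : ∀ u v : F, (u+v)^2 = u^2+v^2 := CharTwo.add_sq
  have h8 : ∀ u v : F, (u+v)^8 = u^8+v^8 := by
    intro u v
    rw [show (u+v)^8 = (((u+v)^2)^2)^2 by ring, hsq, hsq, hsq]; ring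
  have h16 : ∀ u v : F, (u+v)^16 = u^16+v^16 := by
    intro u v
    rw [show (u+v)^16 = ((u+v)^8)^2 by ring, h8, hsq]; ring
  set K : AddSubgroup F :=
    { carrier := {w : F | a*w + b^2*w^2 + b^4*w^8 + a^4*w^16 = 0}
      add_mem' := by
        intro u v hu hv
        simp only [Set.mem_setOf_eq] at *
        rw [hsq, h8, h16]
        linear_combination hu + hv
      zero_mem' := by simp
      neg_mem' := by
        intro u hu
        simpa [CharTwo.neg_eq] using hu } with hK
  have hconv : ∑ w ∈ Finset.univ.filter
        (fun w : F => a*w + b^2*w^2 + b^4*w^8 + a^4*w^16 = 0),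
        chi (Tr (a*w^5 + b*w^3 + c*w))
      = ∑ w : K, chi (Tr (a*(w:F)^5 + b*(w:F)^3 + c*(w:F))) := by
    apply Finset.sum_subtype
    intro w
    simp [hK]
  rw [hconv]
  have hadd : ∀ x y : K, Tr (a*((x+y:K):F)^5 + b*((x+y:K):F)^3 + c*((x+y:K):F))
      = Tr (a*(x:F)^5 + b*(x:F)^3 + c*(x:F)) + Tr (a*(y:F)^5 + b*(y:F)^3 + c*(y:F)) := by
    intro x y
    have hy : a*(y:F) + b^2*(y:F)^2 + b^4*(y:F)^8 + a^4*(y:F)^16 = 0 := y.2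
    have hk := key_identity a b c (x:F) (y:F)
    rw [hy] at hk
    simp only [mul_zero, map_zero, add_zero] at hk
    have hcancel : ∀ u v t : ZMod 2, u + t = v → t = u + v := by decide
    have hxy : ((x+y:K):F) = (x:F) + (y:F) := rfl
    rw [hxy]
    exact hcancel _ _ _ hk
  exact evensplit (fun w : K => Tr (a*(w:F)^5 + b*(w:F)^3 + c*(w:F))) hadd
    ⟨w0, hw0⟩ hfw0

end aux

theorem stmt_14 (s : ℕ) (hs : 2 ≤ s)
    (F : Type) [Field F] [Fintype F] [Algebra (ZMod 2) F]
    (hcard : Fintype.card F = 2 ^ (2 * s)) :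
    ∀ a b c : F, (a, b, c) ≠ (0, 0, 0) →
      Nat.card {x : F | Algebra.trace (ZMod 2) F (a * x ^ 5 + b * x ^ 3 + c * x) = 1} ∈
        ({2 ^ (2 * s - 1), 2 ^ (2 * s - 1) - 2 ^ (s - 1), 2 ^ (2 * s - 1) + 2 ^ (s - 1),
          2 ^ (2 * s - 1) - 2 ^ s, 2 ^ (2 * s - 1) + 2 ^ s,
          2 ^ (2 * s - 1) - 2 ^ (s + 1), 2 ^ (2 * s - 1) + 2 ^ (s + 1)} : Set ℕ) := by
  classical
  intro a b c habc
  haveI : CharP F 2 := charP_of_injective_ringHom (algebraMap (ZMod 2) F).injective 2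
  set N : ℕ := (Finset.univ.filter
    (fun x : F => Algebra.trace (ZMod 2) F (a * x ^ 5 + b * x ^ 3 + c * x) = 1)).card with hN
  have hNcard : Nat.card
      {x : F | Algebra.trace (ZMod 2) F (a * x ^ 5 + b * x ^ 3 + c * x) = 1} = N := by
    rw [Nat.card_eq_fintype_card, hN, Fintype.card_subtype]
    simp only [Set.mem_setOf_eq]
  set S : ℤ := ∑ x : F, chi (Algebra.trace (ZMod 2) F (a * x ^ 5 + b * x ^ 3 + c * x))
    with hSdef
  have hS : S = (2:ℤ)^(2*s) - 2 * N := by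
    rw [hSdef, sum_chi_eq, hcard, hN]
    push_cast
    ring
  have hclass : S = 0 ∨ ∃ j : ℕ, j ≤ 2 ∧ (S = 2^(s+j) ∨ S = -2^(s+j)) := by
    by_cases hab : a = 0 ∧ b = 0
    · left
      obtain ⟨ha, hb⟩ := hab
      have hc : c ≠ 0 := by
        rintro rfl
        exact habc (by rw [ha, hb])
      obtain ⟨x0, hx0⟩ := trace_hits_one hc
      rw [hSdef]
      apply evensplit
        (fun x : F => Algebra.trace (ZMod 2) F (a * x ^ 5 + b * x ^ 3 + c * x)) ?_ x0 ?_
      · intro x y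
        simp only [ha, hb, zero_mul, zero_add]
        rw [mul_add, map_add]
      · simp only [ha, hb, zero_mul, zero_add]
        exact hx0
    · set Kfin : Finset F := Finset.univ.filter
        (fun w : F => a*w + b^2*w^2 + b^4*w^8 + a^4*w^16 = 0) with hKfin
      have hmain : S * S = (Fintype.card F : ℤ) * ∑ w ∈ Kfin,
          chi (Algebra.trace (ZMod 2) F (a*w^5 + b*w^3 + c*w)) := by
        rw [hSdef]
        have h2 : ∀ w : F,
            chi (Algebra.trace (ZMod 2) F (a*w^5 + b*w^3 + c*w)) *
              (∑ x : F, chi (Algebra.trace (ZMod 2) F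
                (x^4 * (a*w + b^2*w^2 + b^4*w^8 + a^4*w^16))))
            = if a*w + b^2*w^2 + b^4*w^8 + a^4*w^16 = 0 then
                chi (Algebra.trace (ZMod 2) F (a*w^5 + b*w^3 + c*w)) * (Fintype.card F : ℤ)
              else 0 := by
          intro w
          rw [innerSumChi a b w]
          split <;> simp
        calc (∑ x : F, chi (Algebra.trace (ZMod 2) F (a * x ^ 5 + b * x ^ 3 + c * x))) *
              (∑ x : F, chi (Algebra.trace (ZMod 2) F (a * x ^ 5 + b * x ^ 3 + c * x)))
            = ∑ w : F, (chi (Algebra.trace (ZMod 2) F (a*w^5 + b*w^3 + c*w)) *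
                ∑ x : F, chi (Algebra.trace (ZMod 2) F
                  (x^4 * (a*w + b^2*w^2 + b^4*w^8 + a^4*w^16)))) := main_sum a b c
          _ = ∑ w : F, (if a*w + b^2*w^2 + b^4*w^8 + a^4*w^16 = 0 then
                chi (Algebra.trace (ZMod 2) F (a*w^5 + b*w^3 + c*w)) * (Fintype.card F : ℤ)
              else 0) := Finset.sum_congr rfl (fun w _ => h2 w)
          _ = ∑ w ∈ Kfin,
                chi (Algebra.trace (ZMod 2) F (a*w^5 + b*w^3 + c*w)) * (Fintype.card F : ℤ) := by
              rw [hKfin, Finset.sum_filter]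
          _ = (Fintype.card F : ℤ) * ∑ w ∈ Kfin,
                chi (Algebra.trace (ZMod 2) F (a*w^5 + b*w^3 + c*w)) := by
              rw [← Finset.sum_mul]; ring
      by_cases hall : ∀ w ∈ Kfin, Algebra.trace (ZMod 2) F (a*w^5 + b*w^3 + c*w) = 0
      · right
        have hT : ∑ w ∈ Kfin, chi (Algebra.trace (ZMod 2) F (a*w^5 + b*w^3 + c*w))
            = (Kfin.card : ℤ) := by
          rw [Finset.sum_congr rfl (fun w hw => by rw [hall w hw])]
          simp [chi]
        obtain ⟨e, he⟩ := K_pow a b (2*s) hcard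
        rw [← hKfin] at he
        have hle : Kfin.card ≤ 16 := by
          have := K_card_le a b hab
          rw [← hKfin] at this
          exact this
        have he4 : e ≤ 4 := by
          by_contra hgt
          push_neg at hgt
          have h32 : (32:ℕ) ≤ 2^e := by
            calc (32:ℕ) = 2^5 := by norm_num
              _ ≤ 2^e := Nat.pow_le_pow_right (by norm_num) hgt
          rw [he] at hle
          omega
        have hSS : S * S = 2^(2*s+e) := by
          rw [hmain, hT, hcard, he]
          push_cast
          rw [← pow_add]
        have hnatZ : ((S.natAbs : ℤ)) ^ 2 = 2 ^ (2*s+e) := by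
          rw [← Int.abs_eq_natAbs, sq_abs, sq]
          exact hSS
        have hnat : S.natAbs ^ 2 = 2 ^ (2*s+e) := by exact_mod_cast hnatZ
        have heven : (2*s+e) % 2 = 0 := by
          have hfac := congrArg (fun m => m.factorization 2) hnat
          simp only [Nat.factorization_pow,
            Nat.Prime.factorization_pow (p := 2) (k := 2*s+e) Nat.prime_two,
            Finsupp.smul_apply, Finsupp.single_eq_same, smul_eq_mul] at hfac
          omega
        obtain ⟨j, hj⟩ : ∃ j, e = 2*j := ⟨e/2, by omega⟩
        refine ⟨j, by omega, ?_⟩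
        have habs : S.natAbs = 2^(s+j) := by
          have h' : S.natAbs ^ 2 = (2^(s+j))^2 := by
            rw [hnat, ← pow_mul]
            congr 1
            omega
          exact Nat.pow_left_injective (by norm_num) h'
        rcases Int.natAbs_eq S with h | h
        · left; rw [h, habs]; push_cast; ring
        · right; rw [h, habs]; push_cast; ring
      · left
        push_neg at hall
        obtain ⟨w0, hw0K, hfw0⟩ := hall
        have hfw0' : Algebra.trace (ZMod 2) F (a*w0^5 + b*w0^3 + c*w0) = 1 := by
          have hu : ∀ u : ZMod 2, u ≠ 0 → u = 1 := by decide
          exact hu _ hfw0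
        rw [hKfin, Finset.mem_filter] at hw0K
        have hz := Ksum_zero a b c w0 hw0K.2 hfw0'
        rw [← hKfin] at hz
        have hzz : S * S = 0 := by rw [hmain, hz, mul_zero]
        exact mul_self_eq_zero.mp hzz
  -- final assembly
  rw [hNcard]
  simp only [Set.mem_insert_iff, Set.mem_singleton_iff]
  have hA : (2:ℤ)^(2*s) = 2 * 2^(2*s-1) := by
    rw [← pow_succ']
    congr 1
    omega
  rcases hclass with h0 | ⟨j, hj2, hpm⟩
  · left
    rw [h0] at hS
    have hZ : (N:ℤ) = 2^(2*s-1) := by linarith [hA]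
    exact_mod_cast hZ
  · have hB : (2:ℤ)^(s+j) = 2 * 2^(s+j-1) := by
      rw [← pow_succ']
      congr 1
      omega
    have hBA : (2:ℕ)^(s+j-1) ≤ 2^(2*s-1) := Nat.pow_le_pow_right (by norm_num) (by omega)
    have hNvalp : S = 2^(s+j) → N = 2^(2*s-1) - 2^(s+j-1) := by
      intro hp
      rw [hp] at hS
      have hZ : (N:ℤ) = 2^(2*s-1) - 2^(s+j-1) := by linarith [hA, hB]
      have hc2 : ((2^(2*s-1) - 2^(s+j-1) : ℕ) : ℤ) = 2^(2*s-1) - 2^(s+j-1) := by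
        rw [Nat.cast_sub hBA]
        push_cast
        ring
      exact_mod_cast hZ.trans hc2.symm
    have hNvalm : S = -2^(s+j) → N = 2^(2*s-1) + 2^(s+j-1) := by
      intro hp
      rw [hp] at hS
      have hZ : (N:ℤ) = 2^(2*s-1) + 2^(s+j-1) := by linarith [hA, hB]
      exact_mod_cast hZ
    interval_cases j
    · rw [show s+0-1 = s-1 from by omega] at hNvalp hNvalm
      rcases hpm with hp | hp
      · right; left; exact hNvalp hp
      · right; right; left; exact hNvalm hp
    · rw [show s+1-1 = s from by omega] at hNvalp hNvalm
      rcases hpm with hp | hp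
      · right; right; right; left; exact hNvalp hp
      · right; right; right; right; left; exact hNvalm hp
    · rw [show s+2-1 = s+1 from by omega] at hNvalp hNvalm
      rcases hpm with hp | hp
      · right; right; right; right; right; left; exact hNvalp hp
      · right; right; right; right; right; right; exact hNvalm hp
end
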